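/- (Exponential 2-state UPG correctness.) Work with probability vectors on 2 states {0,1}; let h = ½·δ_0 + ½·δ_1. For bits r_0, r_1, …, r_n ∈ {0,1} define D_n(r_0; r_n, …, r_1) recursively: D_0(r_0) = δ_{1−r_0}; for n ≥ 1, setting b = max(r_0, r_n): if b = 1 then D_n(r_0; r_n, …, r_1) = δ_0 ⊕ (h ∗ D_{n−1}(r_0; r_{n−1}, …, r_1)), and if b = 0 then D_n(r_0; r_n, …, r_1) = D_{n−1}(r_0; r_{n−1}, …, r_1) ⊕ (h ∗ δ_1). Then for all n ≥ 0 and all bits r_0, …, r_n satisfying (r_0 = 1 → r_i = 0 for all 1 ≤ i ≤ n), the vector D_n(r_0; r_n, …, r_1) assigns probability (r_0·2^n + ∑_{i=1}^{n} r_i·2^{i−1}) / 2^n to state 0 (and the complementary probability to state 1). -/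
import Mathlib


noncomputable section

/-- Series composition: distribution of `min` of two independent states. -/
def smin {N : ℕ} (p q : Fin N → ℝ) : Fin N → ℝ :=
  fun k => ∑ i, ∑ j, if min i j = k then p i * q j else 0

/-- Parallel composition: distribution of `max` of two independent states. -/
def smax {N : ℕ} (p q : Fin N → ℝ) : Fin N → ℝ :=
  fun k => ∑ i, ∑ j, if max i j = k then p i * q j else 0

/-- The point mass at state `s`. -/
def delta {N : ℕ} (s : Fin N) : Fin N → ℝ := fun i => if i = s then 1 else 0

/-- The fair 2-state pswitch `h = ½·δ₀ + ½·δ₁`. -/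
def hB : Fin 2 → ℝ := fun i => (1 / 2) * delta (0 : Fin 2) i + (1 / 2) * delta (1 : Fin 2) i

/-- The exponential 2-state UPG `D_n(r₀; r_n, …, r₁)`:
`D₀(r₀) = δ_{1-r₀}`; for `n ≥ 1`, with `b = max(r₀, r_n)`,
`D_n = δ₀ ⊕ (h ∗ D_{n-1})` if `b = 1` and `D_n = D_{n-1} ⊕ (h ∗ δ₁)` if `b = 0`. -/
def D (r : ℕ → Fin 2) : ℕ → (Fin 2 → ℝ)
  | 0 => delta (1 - r 0)
  | n + 1 =>
    if max (r 0) (r (n + 1)) = 1 then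
      smax (delta (0 : Fin 2)) (smin hB (D r n))
    else
      smax (D r n) (smin hB (delta (1 : Fin 2)))

lemma smin0 (p q : Fin 2 → ℝ) : smin p q 0 = p 0 * q 0 + p 0 * q 1 + p 1 * q 0 := by
  simp [smin, Fin.sum_univ_two]; try ring

lemma smin1 (p q : Fin 2 → ℝ) : smin p q 1 = p 1 * q 1 := by
  simp [smin, Fin.sum_univ_two]

lemma smax0 (p q : Fin 2 → ℝ) : smax p q 0 = p 0 * q 0 := by
  simp [smax, Fin.sum_univ_two]

lemma smax1 (p q : Fin 2 → ℝ) : smax p q 1 = p 0 * q 1 + p 1 * q 0 + p 1 * q 1 := by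
  simp [smax, Fin.sum_univ_two]; ring

lemma fin2 (x : Fin 2) : x = 0 ∨ x = 1 := by omega

/-- Exponential 2-state UPG correctness: with input bits `r₀, …, r_n` (where
`r₀ = 1` forces all other bits to `0`), `D_n` assigns probability
`(r₀·2ⁿ + ∑_{i=1}^n r_i·2^{i-1})/2ⁿ` to state `0` and the complementary
probability to state `1`. -/
theorem upg2_exponential (n : ℕ) (r : ℕ → Fin 2)
    (hr : r 0 = 1 → ∀ i, 1 ≤ i → i ≤ n → r i = 0) :
    D r n 0 =
      (((r 0 : ℕ) : ℝ) * 2 ^ n + ∑ i ∈ Finset.Icc 1 n, ((r i : ℕ) : ℝ) * 2 ^ (i - 1)) / 2 ^ n ∧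
    D r n 1 = 1 - D r n 0 := by
  induction n with
  | zero =>
    rcases fin2 (r 0) with h0 | h0 <;> simp [D, delta, h0]
  | succ n ih =>
    have hr' : r 0 = 1 → ∀ i, 1 ≤ i → i ≤ n → r i = 0 := by
      intro h i h1 h2; exact hr h i h1 (le_trans h2 (Nat.le_succ n))
    obtain ⟨ih0, ih1⟩ := ih hr'
    have hsum : ∑ i ∈ Finset.Icc 1 (n+1), ((r i : ℕ) : ℝ) * 2 ^ (i - 1)
        = (∑ i ∈ Finset.Icc 1 n, ((r i : ℕ) : ℝ) * 2 ^ (i - 1)) + ((r (n+1) : ℕ) : ℝ) * 2 ^ n := by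
      rw [Finset.sum_Icc_succ_top (by omega : 1 ≤ n + 1)]; norm_num
    rcases fin2 (r 0) with h0 | h0
    · rcases fin2 (r (n+1)) with h1 | h1
      · -- b = 0 case
        have hb : max (r 0) (r (n+1)) ≠ 1 := by rw [h0, h1]; decide
        simp only [D, if_neg hb]
        rw [smax0, smax1, smin0, smin1]
        simp only [hB, delta, ih0, ih1, hsum, h0, h1]
        norm_num
        constructor <;> ring
      · -- r0=0, r_{n+1}=1
        have hb : max (r 0) (r (n+1)) = 1 := by rw [h0, h1]; decide
        simp only [D, if_pos hb]
        rw [smax0, smax1, smin0, smin1]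
        simp only [hB, delta, ih0, ih1, hsum, h0, h1]
        norm_num
        constructor
        · field_simp; ring
        · field_simp; ring
    · have h1 : r (n+1) = 0 := hr h0 (n+1) (by omega) le_rfl
      have hall : ∀ i, 1 ≤ i → i ≤ n + 1 → r i = 0 := hr h0
      have hb : max (r 0) (r (n+1)) = 1 := by rw [h0, h1]; decide
      have hz : ∀ m, m ≤ n + 1 → ∑ i ∈ Finset.Icc 1 m, ((r i : ℕ) : ℝ) * 2 ^ (i - 1) = 0 := by
        intro m hm
        apply Finset.sum_eq_zero
        intro i hi
        simp only [Finset.mem_Icc] at hi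
        rw [hr h0 i hi.1 (by omega)]; simp
      have hD0 : D r n 0 = 1 := by
        rw [ih0, h0, hz n (by omega)]
        simp
      have hD1 : D r n 1 = 0 := by rw [ih1, hD0]; ring
      simp only [D, if_pos hb]
      rw [smax0, smax1, smin0, smin1]
      simp only [hB, delta, hD0, hD1, hz (n+1) le_rfl, h0]
      norm_num
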